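/- Let G be a finite group such that G' ∩ Z(G) = 1 and the quotient G/Z(G) is perfect (i.e., equals its own commutator subgroup). Then |Cent(G)| = |Cent(G')|. -/

import Mathlib

/-- The number of distinct element centralizers of a group. -/
noncomputable def numCent (G : Type*) [Group G] : ℕ :=
  Set.ncard {H : Subgroup G | ∃ x : G, H = Subgroup.centralizer ({x} : Set G)}

theorem stmt_18 (G : Type*) [Group G] [Finite G]
    (h1 : commutator G ⊓ Subgroup.center G = ⊥)
    (h2 : commutator (G ⧸ Subgroup.center G) = ⊤) :
    numCent G = numCent (commutator G) := by
  classical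
  set Z := Subgroup.center G
  set N := commutator G
  -- decomposition: every g = c * z with c ∈ N, z ∈ Z
  have hmap : N.map (QuotientGroup.mk' Z) = ⊤ := by
    have : (commutator G).map (QuotientGroup.mk' Z) = commutator (G ⧸ Z) := by
      rw [commutator_def, Subgroup.map_commutator,
        Subgroup.map_top_of_surjective _ (QuotientGroup.mk'_surjective Z), commutator_def]
    rw [show N = commutator G from rfl, this, h2]
  have decomp : ∀ g : G, ∃ c ∈ N, ∃ z ∈ Z, g = c * z := by
    intro g
    have : QuotientGroup.mk' Z g ∈ N.map (QuotientGroup.mk' Z) := by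
      rw [hmap]; trivial
    obtain ⟨c, hc, hcg⟩ := this
    refine ⟨c, hc, c⁻¹ * g, ?_, by group⟩
    have := (QuotientGroup.eq (s := Z) (a := c) (b := g)).mp hcg
    exact this
  -- central elements don't change centralizers
  have cent_mul : ∀ (c : G), ∀ z ∈ Z, Subgroup.centralizer ({c * z} : Set G)
      = Subgroup.centralizer ({c} : Set G) := by
    intro c z hz
    ext k
    simp only [Subgroup.mem_centralizer_singleton_iff]
    have hkz : Commute k z := Subgroup.mem_center_iff.mp hz k
    constructor
    · intro h
      have h' : Commute k (c * z) := h
      have := h'.mul_right hkz.inv_right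
      exact (by simpa [mul_assoc] using this : Commute k c)
    · intro h
      exact (Commute.mul_right h hkz : Commute k (c * z))
  -- Z is contained in every centralizer
  have Z_le : ∀ c : G, Z ≤ Subgroup.centralizer ({c} : Set G) := by
    intro c z hz
    rw [Subgroup.mem_centralizer_singleton_iff]
    exact (Subgroup.mem_center_iff.mp hz c).symm
  -- subgroupOf compatibility
  have sub_eq : ∀ (c : G) (hc : c ∈ N),
      (Subgroup.centralizer ({c} : Set G)).subgroupOf N
        = Subgroup.centralizer ({(⟨c, hc⟩ : N)} : Set N) := by
    intro c hc
    ext y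
    simp only [Subgroup.mem_subgroupOf, Subgroup.mem_centralizer_singleton_iff]
    constructor
    · intro h; exact Subtype.ext h
    · intro h; exact congrArg Subtype.val h
  set S : Set (Subgroup G) := {H : Subgroup G | ∃ x : G, H = Subgroup.centralizer ({x} : Set G)}
  set f : Subgroup G → Subgroup N := fun H => H.subgroupOf N
  have hinj : Set.InjOn f S := by
    rintro H₁ ⟨x₁, rfl⟩ H₂ ⟨x₂, rfl⟩ hf
    obtain ⟨c₁, hc₁, z₁, hz₁, rfl⟩ := decomp x₁
    obtain ⟨c₂, hc₂, z₂, hz₂, rfl⟩ := decomp x₂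
    rw [cent_mul c₁ z₁ hz₁, cent_mul c₂ z₂ hz₂] at hf ⊢
    ext g
    obtain ⟨c, hc, z, hz, rfl⟩ := decomp g
    have key : ∀ (d : G), z ∈ Subgroup.centralizer ({d} : Set G) →
        (c * z ∈ Subgroup.centralizer ({d} : Set G) ↔ c ∈ Subgroup.centralizer ({d} : Set G)) := by
      intro d hzd
      constructor
      · intro h
        have := mul_mem h (inv_mem hzd)
        simpa using this
      · intro h; exact mul_mem h hzd
    rw [key c₁ (Z_le c₁ hz), key c₂ (Z_le c₂ hz)]
    have hf' : (Subgroup.centralizer ({c₁} : Set G)).subgroupOf N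
        = (Subgroup.centralizer ({c₂} : Set G)).subgroupOf N := hf
    have : (⟨c, hc⟩ : N) ∈ (Subgroup.centralizer ({c₁} : Set G)).subgroupOf N
        ↔ (⟨c, hc⟩ : N) ∈ (Subgroup.centralizer ({c₂} : Set G)).subgroupOf N := by rw [hf']
    simpa [Subgroup.mem_subgroupOf] using this
  have himg : f '' S = {H : Subgroup N | ∃ x : N, H = Subgroup.centralizer ({x} : Set N)} := by
    ext K
    constructor
    · rintro ⟨H, ⟨x, rfl⟩, rfl⟩
      obtain ⟨c, hc, z, hz, rfl⟩ := decomp x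
      rw [show f (Subgroup.centralizer ({c * z} : Set G))
          = (Subgroup.centralizer ({c * z} : Set G)).subgroupOf N from rfl,
        cent_mul c z hz, sub_eq c hc]
      exact ⟨⟨c, hc⟩, rfl⟩
    · rintro ⟨⟨x, hx⟩, rfl⟩
      exact ⟨Subgroup.centralizer ({x} : Set G), ⟨x, rfl⟩, (sub_eq x hx)⟩
  unfold numCent
  rw [← himg, Set.ncard_image_of_injOn hinj]
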